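/- Let U ⊆ ℝⁿ be open, f : U → ℝⁿ a C¹ local diffeomorphism such that e^{−c}‖w‖ ≤ ‖Df(v)w‖ ≤ e^{c}‖w‖ for all v ∈ U and w ∈ ℝⁿ, for some c > 0. Then for any C¹ curve α : [0, a] → ℝⁿ with image in f(U), any lift α̂ : [0, b) → U of α with f ∘ α̂ = α|_{[0,b)} satisfies: the Euclidean length of α̂ is at most e^{c} times the Euclidean length of α|_{[0,b)}. -/

import Mathlib

open Set Real

lemma stmt8_loc {n : ℕ} {U : Set (EuclideanSpace ℝ (Fin n))} (hU : IsOpen U)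
    {f : EuclideanSpace ℝ (Fin n) → EuclideanSpace ℝ (Fin n)}
    (hf : ContDiffOn ℝ 1 f U) {c K : ℝ} (hK : Real.exp c < K)
    (hDf : ∀ v ∈ U, ∀ w : EuclideanSpace ℝ (Fin n),
      Real.exp (-c) * ‖w‖ ≤ ‖fderiv ℝ f v w‖)
    {b : ℝ} {αhat : ℝ → EuclideanSpace ℝ (Fin n)}
    (hαhatcont : ContinuousOn αhat (Ico 0 b))
    (hαhatU : ∀ t ∈ Ico 0 b, αhat t ∈ U)
    {u : ℝ} (hu : u ∈ Ico 0 b) :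
    ∃ δ > 0, ∀ s ∈ Ico 0 b, ∀ s' ∈ Ico 0 b, dist s u < δ → dist s' u < δ →
      ‖αhat s - αhat s'‖ ≤ K * ‖f (αhat s) - f (αhat s')‖ := by
  have hK0 : (0:ℝ) < K := (Real.exp_pos c).trans hK
  set ε : ℝ := Real.exp (-c) - K⁻¹ with hε
  have hεpos : 0 < ε := by
    have : K⁻¹ < Real.exp (-c) := by
      rw [Real.exp_neg]
      exact inv_strictAnti₀ (Real.exp_pos c) hK
    rw [hε]; linarith
  set v0 := αhat u with hv0def
  have hv0 : v0 ∈ U := hαhatU u hu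
  have hfd : ContinuousOn (fderiv ℝ f) U := hf.continuousOn_fderiv_of_isOpen hU le_rfl
  have hca : ContinuousAt (fderiv ℝ f) v0 := hfd.continuousAt (hU.mem_nhds hv0)
  obtain ⟨r1, hr1, hr1'⟩ := Metric.continuousAt_iff.1 hca ε hεpos
  obtain ⟨r2, hr2, hr2'⟩ := Metric.isOpen_iff.1 hU v0 hv0
  set r := min r1 r2 / 2 with hrdef
  have hr : 0 < r := by positivity
  have hball : Metric.closedBall v0 r ⊆ U := by
    intro z hz
    apply hr2'
    have : r < r2 := by
      have := min_le_right r1 r2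
      simp only [hrdef]; linarith
    exact lt_of_le_of_lt (Metric.mem_closedBall.1 hz) this
  have hbound : ∀ z ∈ Metric.closedBall v0 r, ‖fderiv ℝ f z - fderiv ℝ f v0‖ ≤ ε := by
    intro z hz
    have : dist z v0 < r1 := by
      have : r < r1 := by
        have := min_le_left r1 r2
        simp only [hrdef]; linarith
      exact lt_of_le_of_lt (Metric.mem_closedBall.1 hz) this
    have := hr1' this
    rw [dist_eq_norm] at this
    exact this.le
  set A := fderiv ℝ f v0 with hA
  have hdiff : ∀ z ∈ Metric.closedBall v0 r, DifferentiableAt ℝ f z := fun z hz =>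
    (hf.differentiableOn one_ne_zero).differentiableAt (hU.mem_nhds (hball hz))
  have hmvt : ∀ p ∈ Metric.closedBall v0 r, ∀ q ∈ Metric.closedBall v0 r,
      ‖(f p - A p) - (f q - A q)‖ ≤ ε * ‖p - q‖ := by
    intro p hp q hq
    have := (convex_closedBall v0 r).norm_image_sub_le_of_norm_hasFDerivWithin_le
      (f := fun z => f z - A z) (f' := fun z => fderiv ℝ f z - A)
      (fun z hz => (((hdiff z hz).hasFDerivAt).sub (A.hasFDerivAt)).hasFDerivWithinAt)
      (fun z hz => hbound z hz) hq hp
    exact this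
  have key : ∀ p ∈ Metric.closedBall v0 r, ∀ q ∈ Metric.closedBall v0 r,
      ‖p - q‖ ≤ K * ‖f p - f q‖ := by
    intro p hp q hq
    have h1 : Real.exp (-c) * ‖p - q‖ ≤ ‖A (p - q)‖ := hDf v0 hv0 (p - q)
    have h2 : ‖A (p - q)‖ ≤ ‖f p - f q‖ + ε * ‖p - q‖ := by
      have h3 := hmvt p hp q hq
      have h4 : A (p - q) = (f p - f q) - ((f p - A p) - (f q - A q)) := by
        simp [map_sub]; abel
      calc ‖A (p - q)‖ ≤ ‖f p - f q‖ + ‖(f p - A p) - (f q - A q)‖ := by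
            rw [h4]; exact norm_sub_le _ _
        _ ≤ ‖f p - f q‖ + ε * ‖p - q‖ := by linarith
    have h5 : K⁻¹ * ‖p - q‖ ≤ ‖f p - f q‖ := by
      have : (Real.exp (-c) - ε) * ‖p - q‖ ≤ ‖f p - f q‖ := by nlinarith [norm_nonneg (p - q)]
      simpa [hε] using this
    calc ‖p - q‖ = K * (K⁻¹ * ‖p - q‖) := by field_simp
      _ ≤ K * ‖f p - f q‖ := by nlinarith
  obtain ⟨δ, hδ, hδ'⟩ := Metric.continuousWithinAt_iff.1 (hαhatcont u hu) r hr
  refine ⟨δ, hδ, fun s hs s' hs' hds hds' => ?_⟩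
  have hps : αhat s ∈ Metric.closedBall v0 r := (hδ' hs hds).le
  have hps' : αhat s' ∈ Metric.closedBall v0 r := (hδ' hs' hds').le
  exact key _ hps _ hps'

lemma stmt8_seg {n : ℕ} {b K : ℝ}
    {α αhat : ℝ → EuclideanSpace ℝ (Fin n)}
    (hK0 : 0 < K)
    (hloc : ∀ u ∈ Ico 0 b, ∃ δ > 0, ∀ s ∈ Ico 0 b, ∀ s' ∈ Ico 0 b,
      dist s u < δ → dist s' u < δ → ‖αhat s - αhat s'‖ ≤ K * ‖α s - α s'‖)
    {x y : ℝ} (hx : x ∈ Ico 0 b) (hy : y ∈ Ico 0 b) (hxy : x ≤ y) :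
    edist (αhat y) (αhat x) ≤ ENNReal.ofReal K * eVariationOn α (Icc x y) := by
  have hsub : Icc x y ⊆ Ico 0 b := fun t ht => ⟨le_trans hx.1 ht.1, lt_of_le_of_lt ht.2 hy.2⟩
  choose! δ hδpos hδ using fun (u : Icc x y) => hloc u (hsub u.2)
  obtain ⟨δ0, hδ0, hleb⟩ := lebesgue_number_lemma_of_metric isCompact_Icc
    (c := fun u : Icc x y => Metric.ball (u : ℝ) (δ u)) (fun i => Metric.isOpen_ball)
    (fun t ht => mem_iUnion.2 ⟨⟨t, ht⟩, Metric.mem_ball_self (hδpos ⟨t, ht⟩)⟩)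
  obtain ⟨m, hm⟩ := exists_nat_gt ((y - x) / δ0)
  set M : ℕ := m + 1 with hM
  have hMpos : (0:ℝ) < M := by positivity
  set h : ℝ := (y - x) / M with hh
  have hhnn : 0 ≤ h := by
    apply div_nonneg (by linarith) hMpos.le
  have hhδ : h < δ0 := by
    rw [hh, div_lt_iff₀ hMpos]
    have h1 : (y - x) / δ0 < M := by
      have : (m:ℝ) ≤ M := by exact_mod_cast Nat.le_succ m
      linarith
    rw [mul_comm]
    exact (div_lt_iff₀ hδ0).1 h1
  set w : ℕ → ℝ := fun j => x + (min j M : ℕ) * h with hw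
  have hwmono : Monotone w := by
    intro i j hij
    have : (min i M : ℕ) ≤ (min j M : ℕ) := min_le_min hij le_rfl
    have : ((min i M : ℕ) : ℝ) ≤ ((min j M : ℕ) : ℝ) := by exact_mod_cast this
    simp only [hw]
    nlinarith
  have hwmem : ∀ j, w j ∈ Icc x y := by
    intro j
    constructor
    · simp only [hw]
      have : (0:ℝ) ≤ ((min j M : ℕ) : ℝ) * h := by positivity
      linarith
    · simp only [hw]
      have h1 : ((min j M : ℕ) : ℝ) ≤ (M:ℝ) := by exact_mod_cast min_le_right j M
      have h2 : (M:ℝ) * h = y - x := by rw [hh]; field_simp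
      nlinarith
  have hw0 : w 0 = x := by simp [hw]
  have hwM : w M = y := by
    simp only [hw, min_self]
    rw [hh]; field_simp; ring
  have hstep : ∀ j, dist (w (j+1)) (w j) < δ0 := by
    intro j
    have h1 : ((min (j+1) M : ℕ) : ℝ) - ((min j M : ℕ) : ℝ) ≤ 1 := by
      have : min (j+1) M ≤ min j M + 1 := by omega
      have := (Nat.cast_le (α := ℝ)).2 this
      push_cast at this ⊢; linarith
    have h2 : ((min j M : ℕ) : ℝ) ≤ ((min (j+1) M : ℕ) : ℝ) := by
      exact_mod_cast min_le_min (Nat.le_succ j) le_rfl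
    rw [dist_eq_norm]
    simp only [hw]
    rw [Real.norm_eq_abs, abs_of_nonneg (by nlinarith)]
    calc x + (min (j+1) M : ℕ) * h - (x + (min j M : ℕ) * h)
        = (((min (j+1) M : ℕ) : ℝ) - ((min j M : ℕ) : ℝ)) * h := by ring
      _ ≤ 1 * h := by nlinarith
      _ < δ0 := by linarith
  have hpiece : ∀ j, edist (αhat (w j)) (αhat (w (j+1)))
      ≤ ENNReal.ofReal K * edist (α (w (j+1))) (α (w j)) := by
    intro j
    obtain ⟨i, hi⟩ := hleb (w j) (hwmem j)
    have hj1 : w j ∈ Metric.ball (i:ℝ) (δ i) := hi (Metric.mem_ball_self hδ0)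
    have hj2 : w (j+1) ∈ Metric.ball (i:ℝ) (δ i) := hi (by
      rw [Metric.mem_ball]; exact hstep j)
    have := hδ i (w j) (hsub (hwmem j)) (w (j+1)) (hsub (hwmem (j+1)))
      (Metric.mem_ball.1 hj1) (Metric.mem_ball.1 hj2)
    rw [edist_dist, edist_dist, dist_eq_norm, dist_eq_norm,
      ← ENNReal.ofReal_mul hK0.le]
    apply ENNReal.ofReal_le_ofReal
    rw [norm_sub_rev (α (w (j+1)))]
    exact this
  calc edist (αhat y) (αhat x) = edist (αhat (w 0)) (αhat (w M)) := by
        rw [hw0, hwM, edist_comm]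
    _ ≤ ∑ j ∈ Finset.range M, edist (αhat (w j)) (αhat (w (j+1))) :=
        edist_le_range_sum_edist (fun j => αhat (w j)) M
    _ ≤ ∑ j ∈ Finset.range M, ENNReal.ofReal K * edist (α (w (j+1))) (α (w j)) :=
        Finset.sum_le_sum fun j _ => hpiece j
    _ = ENNReal.ofReal K * ∑ j ∈ Finset.range M, edist (α (w (j+1))) (α (w j)) := by
        rw [Finset.mul_sum]
    _ ≤ ENNReal.ofReal K * eVariationOn α (Icc x y) := by
        apply mul_le_mul_right
        exact eVariationOn.sum_le (f := α) (n := M) hwmono hwmem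

/-- Length control of lifts through a map with two-sided derivative bounds
(used in Lemma 2.6). Lengths of curves are measured as total (Euclidean)
variations. -/
theorem stmt_8
    {n : ℕ} (U : Set (EuclideanSpace ℝ (Fin n))) (hU : IsOpen U)
    (f : EuclideanSpace ℝ (Fin n) → EuclideanSpace ℝ (Fin n))
    (hf : ContDiffOn ℝ 1 f U)
    (c : ℝ) (hc : 0 < c)
    (hDf : ∀ v ∈ U, ∀ w : EuclideanSpace ℝ (Fin n),
      exp (-c) * ‖w‖ ≤ ‖fderiv ℝ f v w‖ ∧ ‖fderiv ℝ f v w‖ ≤ exp c * ‖w‖)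
    (a b : ℝ) (ha : 0 < a) (hb : 0 < b) (hba : b ≤ a)
    (α : ℝ → EuclideanSpace ℝ (Fin n))
    (hα : ContDiffOn ℝ 1 α (Icc 0 a))
    (hαim : ∀ t ∈ Icc 0 a, α t ∈ f '' U)
    (αhat : ℝ → EuclideanSpace ℝ (Fin n))
    (hαhatcont : ContinuousOn αhat (Ico 0 b))
    (hαhatU : ∀ t ∈ Ico 0 b, αhat t ∈ U)
    (hlift : ∀ t ∈ Ico 0 b, f (αhat t) = α t) :
    eVariationOn αhat (Ico 0 b) ≤ ENNReal.ofReal (exp c) * eVariationOn α (Ico 0 b) := by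
  set V := eVariationOn α (Ico 0 b) with hV
  -- the key estimate for every K > exp c
  have H : ∀ K : ℝ, exp c < K → eVariationOn αhat (Ico 0 b) ≤ ENNReal.ofReal K * V := by
    intro K hK
    have hK0 : (0:ℝ) < K := (Real.exp_pos c).trans hK
    have hloc : ∀ u ∈ Ico 0 b, ∃ δ > 0, ∀ s ∈ Ico 0 b, ∀ s' ∈ Ico 0 b,
        dist s u < δ → dist s' u < δ → ‖αhat s - αhat s'‖ ≤ K * ‖α s - α s'‖ := by
      intro u hu
      obtain ⟨δ, hδ, hδ'⟩ := stmt8_loc hU hf hK (fun v hv w => (hDf v hv w).1)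
        hαhatcont hαhatU hu
      refine ⟨δ, hδ, fun s hs s' hs' hds hds' => ?_⟩
      have := hδ' s hs s' hs' hds hds'
      rwa [hlift s hs, hlift s' hs'] at this
    have hseg : ∀ x ∈ Ico 0 b, ∀ y ∈ Ico 0 b, x ≤ y →
        edist (αhat y) (αhat x) ≤ ENNReal.ofReal K * eVariationOn α (Icc x y) :=
      fun x hx y hy hxy => stmt8_seg hK0 hloc hx hy hxy
    have hev : eVariationOn αhat (Ico 0 b)
        = ⨆ p : ℕ × { u : ℕ → ℝ // Monotone u ∧ ∀ i, u i ∈ Ico 0 b },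
          ∑ i ∈ Finset.range p.1, edist (αhat (p.2.1 (i + 1))) (αhat (p.2.1 i)) := rfl
    rw [hev]
    refine iSup_le ?_
    rintro ⟨p, u, hu, us⟩
    have hsubI : ∀ i j : ℕ, Icc (u i) (u j) ⊆ Ico 0 b := fun i j t ht =>
      ⟨le_trans (us i).1 ht.1, lt_of_le_of_lt ht.2 (us j).2⟩
    have tele : ∀ q : ℕ, ∑ i ∈ Finset.range q,
        eVariationOn α (Ico 0 b ∩ Icc (u i) (u (i+1)))
        = eVariationOn α (Ico 0 b ∩ Icc (u 0) (u q)) := by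
      intro q
      induction q with
      | zero =>
        rw [Finset.range_zero, Finset.sum_empty]
        refine (eVariationOn.subsingleton α ?_).symm
        intro s hs t ht
        have h1 : s = u 0 := le_antisymm hs.2.2 hs.2.1
        have h2 : t = u 0 := le_antisymm ht.2.2 ht.2.1
        rw [h1, h2]
      | succ q ih =>
        rw [Finset.sum_range_succ, ih]
        exact eVariationOn.Icc_add_Icc α (hu (Nat.zero_le q)) (hu (Nat.le_succ q)) (us q)
    calc ∑ i ∈ Finset.range p, edist (αhat (u (i + 1))) (αhat (u i))
        ≤ ∑ i ∈ Finset.range p, ENNReal.ofReal K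
            * eVariationOn α (Ico 0 b ∩ Icc (u i) (u (i+1))) := by
          refine Finset.sum_le_sum fun i _ => ?_
          rw [inter_eq_self_of_subset_right (hsubI i (i+1))]
          exact hseg (u i) (us i) (u (i+1)) (us (i+1)) (hu (Nat.le_succ i))
      _ = ENNReal.ofReal K * ∑ i ∈ Finset.range p,
            eVariationOn α (Ico 0 b ∩ Icc (u i) (u (i+1))) := by rw [Finset.mul_sum]
      _ = ENNReal.ofReal K * eVariationOn α (Ico 0 b ∩ Icc (u 0) (u p)) := by rw [tele]
      _ ≤ ENNReal.ofReal K * V := by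
          exact mul_le_mul_right (eVariationOn.mono α inter_subset_left) _
  -- pass to the limit K → exp c
  rcases eq_or_ne V ⊤ with hVtop | hVtop
  · rw [hVtop, ENNReal.mul_top (ENNReal.ofReal_pos.2 (Real.exp_pos c)).ne']
    exact le_top
  rcases eq_or_ne V 0 with hV0 | hV0
  · have := H (exp c + 1) (by linarith)
    rw [hV0, mul_zero] at this ⊢
    exact this
  have hVr : 0 < V.toReal := ENNReal.toReal_pos hV0 hVtop
  refine ENNReal.le_of_forall_pos_le_add fun ε hε hlt => ?_
  set K : ℝ := exp c + (ε : ℝ) / V.toReal with hKdef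
  have hKgt : exp c < K := by
    rw [hKdef]
    have : (0:ℝ) < (ε:ℝ) / V.toReal := by positivity
    linarith
  have h1 := H K hKgt
  have h2 : ENNReal.ofReal K * V = ENNReal.ofReal (exp c) * V + ε := by
    rw [hKdef, ENNReal.ofReal_add (Real.exp_pos c).le (by positivity), add_mul]
    congr 1
    have hVeq : V = ENNReal.ofReal V.toReal := (ENNReal.ofReal_toReal hVtop).symm
    nth_rewrite 2 [hVeq]
    rw [← ENNReal.ofReal_mul (by positivity), div_mul_cancel₀ _ (ne_of_gt hVr)]
    exact ENNReal.ofReal_coe_nnreal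
  rw [← h2]
  exact h1
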